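/- Let (Ω, μ) be a measure space, and let φ̄, ū, λ̄: Ω → ℝ be measurable with α ≤ ū ≤ β a.e., κ > 0, γ ≥ 0, and ū(x) = proj_{[α,β]}(−(1/κ)(φ̄(x) + γλ̄(x))) a.e. Let v ∈ L²(μ) satisfy v ≥ 0 a.e. on {ū = α} and v ≤ 0 a.e. on {ū = β}. Then (φ̄(x) + κū(x) + γλ̄(x)) v(x) ≥ 0 for a.e. x. If moreover ∫ (φ̄ + κū + γλ̄) v dμ ≤ 0, then (φ̄(x) + κū(x) + γλ̄(x)) v(x) = 0 for a.e. x. -/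

import Mathlib

open MeasureTheory

/-- Lemma 2.7: the sign conditions of the critical cone combined with the
projection formula force pointwise complementarity. -/
theorem stmt_16 {Ω : Type*} [MeasurableSpace Ω] (μ : Measure Ω)
    (φb ub lb v : Ω → ℝ) (α β κ γ : ℝ)
    (hκ : 0 < κ) (hγ : 0 ≤ γ) (hαβ : α < β)
    (hφm : Measurable φb) (hum : Measurable ub) (hlm : Measurable lb)
    (hbound : ∀ᵐ x ∂μ, α ≤ ub x ∧ ub x ≤ β)
    (hproj : ∀ᵐ x ∂μ, ub x = max α (min β (-(1/κ) * (φb x + γ * lb x))))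
    (hv : MemLp v 2 μ)
    (hva : ∀ᵐ x ∂μ, ub x = α → 0 ≤ v x)
    (hvb : ∀ᵐ x ∂μ, ub x = β → v x ≤ 0) :
    (∀ᵐ x ∂μ, 0 ≤ (φb x + κ * ub x + γ * lb x) * v x) ∧
    (Integrable (fun x => (φb x + κ * ub x + γ * lb x) * v x) μ →
      (∫ x, (φb x + κ * ub x + γ * lb x) * v x ∂μ) ≤ 0 →
      ∀ᵐ x ∂μ, (φb x + κ * ub x + γ * lb x) * v x = 0) := by
  have key : ∀ᵐ x ∂μ, 0 ≤ (φb x + κ * ub x + γ * lb x) * v x := by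
    filter_upwards [hproj, hva, hvb] with x hp ha hb
    set s : ℝ := -(1/κ) * (φb x + γ * lb x) with hs
    have hfac : φb x + κ * ub x + γ * lb x = κ * (ub x - s) := by
      rw [hs]; field_simp; ring
    rw [hfac]
    have trich : ub x = s ∨ (s ≤ ub x ∧ 0 ≤ v x) ∨ (ub x ≤ s ∧ v x ≤ 0) := by
      rcases le_total s α with h | h
      · have hua : ub x = α := by
          rw [hp, max_eq_left]
          exact le_trans (min_le_right _ _) h
        exact Or.inr (Or.inl ⟨by linarith, ha hua⟩)
      · rcases le_total β s with h' | h'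
        · have hub : ub x = β := by
            rw [hp, min_eq_left h', max_eq_right hαβ.le]
          exact Or.inr (Or.inr ⟨by linarith, hb hub⟩)
        · left
          rw [hp, min_eq_right h', max_eq_right h]
    rcases trich with h | ⟨h, hv0⟩ | ⟨h, hv0⟩
    · simp [h]
    · have : 0 ≤ ub x - s := by linarith
      positivity
    · have h1 : ub x - s ≤ 0 := by linarith
      nlinarith [mul_nonneg (neg_nonneg.mpr h1) (neg_nonneg.mpr hv0)]
  refine ⟨key, fun hint hle => ?_⟩
  have h0 : (∫ x, (φb x + κ * ub x + γ * lb x) * v x ∂μ) = 0 :=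
    le_antisymm hle (integral_nonneg_of_ae key)
  exact (integral_eq_zero_iff_of_nonneg_ae key hint).mp h0
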